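/- If f : [0,b] → ℝ is convex, then f((a+c)/2) ≤ (1/(c-a)) ∫_a^c f(x) dx ≤ (f(a)+f(c))/2 for all a < c in [0,b]. -/

import Mathlib

theorem hermite_hadamard (b a c : ℝ) (f : ℝ → ℝ)
    (hconv : ConvexOn ℝ (Set.Icc 0 b) f)
    (ha : a ∈ Set.Icc (0:ℝ) b) (hc : c ∈ Set.Icc (0:ℝ) b) (hac : a < c)
    (hint : IntervalIntegrable f MeasureTheory.volume a c) :
    f ((a + c) / 2) ≤ (1 / (c - a)) * ∫ x in a..c, f x ∧
      (1 / (c - a)) * ∫ x in a..c, f x ≤ (f a + f c) / 2 := by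
  have hca : (0:ℝ) < c - a := by linarith
  have hsub : Set.Icc a c ⊆ Set.Icc 0 b := Set.Icc_subset_Icc ha.1 hc.2
  have hint' : IntervalIntegrable (fun x => f (a + c - x)) MeasureTheory.volume a c := by
    simpa using (hint.comp_sub_left (a + c)).symm
  constructor
  · -- left inequality
    have key : ∀ x ∈ Set.Icc a c, f ((a + c) / 2) ≤ (f x + f (a + c - x)) / 2 := by
      intro x hx
      have hx1 : x ∈ Set.Icc 0 b := hsub hx
      have hx2 : (a + c - x) ∈ Set.Icc 0 b := by
        apply hsub
        constructor <;> [linarith [hx.2]; linarith [hx.1]]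
      have := hconv.2 hx1 hx2 (by norm_num : (0:ℝ) ≤ 1/2) (by norm_num : (0:ℝ) ≤ 1/2)
        (by norm_num)
      simp only [smul_eq_mul] at this
      calc f ((a + c) / 2) = f ((1:ℝ)/2 * x + (1:ℝ)/2 * (a + c - x)) := by ring_nf
        _ ≤ 1/2 * f x + 1/2 * f (a + c - x) := this
        _ = (f x + f (a + c - x)) / 2 := by ring
    have hmono : (∫ x in a..c, f ((a + c) / 2)) ≤ ∫ x in a..c, (f x + f (a + c - x)) / 2 := by
      apply intervalIntegral.integral_mono_on hac.le
      · exact intervalIntegrable_const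
      · exact (hint.add hint').div_const 2
      · exact key
    have h1 : (∫ x in a..c, f ((a + c) / 2)) = (c - a) * f ((a + c) / 2) := by
      simp [smul_eq_mul]
    have h2 : (∫ x in a..c, f (a + c - x)) = ∫ x in a..c, f x := by
      have h := intervalIntegral.integral_comp_sub_left f (a + c) (a := a) (b := c)
      rw [show a + c - c = a by ring, show a + c - a = c by ring] at h
      exact h
    have h3 : (∫ x in a..c, (f x + f (a + c - x)) / 2) = ∫ x in a..c, f x := by
      rw [intervalIntegral.integral_div, intervalIntegral.integral_add hint hint', h2]
      ring
    rw [h1, h3] at hmono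
    rw [div_mul_eq_mul_div, one_mul, le_div_iff₀ hca]
    linarith
  · -- right inequality
    have key : ∀ x ∈ Set.Icc a c, f x ≤ ((c - x) * f a + (x - a) * f c) / (c - a) := by
      intro x hx
      have ht1 : (0:ℝ) ≤ (c - x) / (c - a) := div_nonneg (by linarith [hx.2]) hca.le
      have ht2 : (0:ℝ) ≤ (x - a) / (c - a) := div_nonneg (by linarith [hx.1]) hca.le
      have hts : (c - x) / (c - a) + (x - a) / (c - a) = 1 := by
        field_simp
        ring
      have := hconv.2 ha hc ht1 ht2 hts
      simp only [smul_eq_mul] at this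
      have hx' : (c - x) / (c - a) * a + (x - a) / (c - a) * c = x := by
        field_simp; ring
      rw [hx'] at this
      calc f x ≤ (c - x) / (c - a) * f a + (x - a) / (c - a) * f c := this
        _ = ((c - x) * f a + (x - a) * f c) / (c - a) := by ring
    have hlin : IntervalIntegrable (fun x => ((c - x) * f a + (x - a) * f c) / (c - a))
        MeasureTheory.volume a c := by
      apply Continuous.intervalIntegrable; continuity
    have hmono := intervalIntegral.integral_mono_on hac.le hint hlin key
    have hval : (∫ x in a..c, ((c - x) * f a + (x - a) * f c) / (c - a))
        = (c - a) * ((f a + f c) / 2) := by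
      have : (fun x => ((c - x) * f a + (x - a) * f c) / (c - a))
          = fun x => (c * f a - a * f c) / (c - a) + ((f c - f a) / (c - a)) * x := by
        funext x; field_simp; ring
      rw [this]
      rw [intervalIntegral.integral_add (by apply Continuous.intervalIntegrable; continuity)
        (by apply Continuous.intervalIntegrable; continuity)]
      rw [intervalIntegral.integral_const, intervalIntegral.integral_const_mul,
        integral_id, smul_eq_mul]
      field_simp
      ring
    rw [hval] at hmono
    rw [div_mul_eq_mul_div, one_mul, div_le_iff₀ hca]
    linarith
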